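/- Define three mutation moves on ordered triples of positive integers: (p1,p2,p3) ↦ (3*p2*p3 - p1, p2, p3), (p1,p2,p3) ↦ (p1, 3*p1*p3 - p2, p3), and (p1,p2,p3) ↦ (p1, p2, 3*p1*p2 - p3). Then every Markov triple can be obtained from the triple (1,1,1) by a finite sequence of these mutation moves together with permutations of the entries. -/

import Mathlib

/-- A Markov triple: positive integers satisfying the Markov equation. -/
def IsMarkovTriple (p1 p2 p3 : ℤ) : Prop :=
  0 < p1 ∧ 0 < p2 ∧ 0 < p3 ∧ p1 ^ 2 + p2 ^ 2 + p3 ^ 2 = 3 * p1 * p2 * p3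

/-- One step: a mutation at one of the three entries, or a permutation of the
entries. -/
def MarkovStep : ℤ × ℤ × ℤ → ℤ × ℤ × ℤ → Prop := fun t t' =>
  -- mutations
  t' = (3 * t.2.1 * t.2.2 - t.1, t.2.1, t.2.2) ∨
  t' = (t.1, 3 * t.1 * t.2.2 - t.2.1, t.2.2) ∨
  t' = (t.1, t.2.1, 3 * t.1 * t.2.1 - t.2.2) ∨
  -- permutations of the entries
  t' = (t.1, t.2.2, t.2.1) ∨
  t' = (t.2.1, t.1, t.2.2) ∨
  t' = (t.2.1, t.2.2, t.1) ∨
  t' = (t.2.2, t.1, t.2.1) ∨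
  t' = (t.2.2, t.2.1, t.1)

lemma markov_swap23 {a b c : ℤ} (h : IsMarkovTriple a b c) : IsMarkovTriple a c b :=
  ⟨h.1, h.2.2.1, h.2.1, by linear_combination h.2.2.2⟩

lemma markov_swap12 {a b c : ℤ} (h : IsMarkovTriple a b c) : IsMarkovTriple b a c :=
  ⟨h.2.1, h.1, h.2.2.1, by linear_combination h.2.2.2⟩

/-- Core descent step for a sorted triple. -/
lemma markov_core (n : ℕ)
    (IH : ∀ a b c : ℤ, IsMarkovTriple a b c → a + b + c ≤ (n : ℤ) →
      Relation.ReflTransGen MarkovStep (1, 1, 1) (a, b, c))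
    (a b c : ℤ) (h : IsMarkovTriple a b c) (hab : a ≤ b) (hbc : b ≤ c)
    (hle : a + b + c ≤ (n : ℤ) + 1) :
    Relation.ReflTransGen MarkovStep (1, 1, 1) (a, b, c) := by
  obtain ⟨ha, hb, hc, heq⟩ := h
  by_cases hb1 : b = 1
  · have ha1 : a = 1 := by omega
    subst ha1; subst hb1
    have hcc : (c - 1) * (c - 2) = 0 := by linear_combination heq
    rcases mul_eq_zero.mp hcc with h' | h'
    · have : c = 1 := by omega
      subst this; exact Relation.ReflTransGen.refl
    · have : c = 2 := by omega
      subst this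
      exact Relation.ReflTransGen.refl.tail (by right; right; left; norm_num)
  · have hb2 : 2 ≤ b := by omega
    set q : ℤ := 3 * a * b - c with hq
    have hqc : q * c = a ^ 2 + b ^ 2 := by rw [hq]; linear_combination -heq
    have hfb : (b - q) * (b - c) < 0 := by
      have key : (b - q) * (b - c) = 2 * b ^ 2 - 3 * a * b ^ 2 + a ^ 2 := by
        rw [hq]; linear_combination -heq
      rw [key]
      rcases eq_or_lt_of_le (show (0:ℤ) + 1 ≤ a by omega) with h1 | h1
      · nlinarith
      · nlinarith [mul_le_mul hab hab (le_of_lt ha) (by linarith : (0:ℤ) ≤ b)]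
    have hsigns : 0 < b - q ∧ b - c < 0 := by
      rcases mul_neg_iff.mp hfb with h' | h'
      · exact h'
      · exfalso; linarith [h'.2]
    have hqb : q < b := by linarith [hsigns.1]
    have hbc' : b < c := by linarith [hsigns.2]
    have hq0 : 0 < q := by
      have h1 : 0 < a ^ 2 + b ^ 2 := by positivity
      nlinarith
    have hm : IsMarkovTriple a b q :=
      ⟨ha, hb, hq0, by rw [hq]; linear_combination heq⟩
    have hsmall : a + b + q ≤ (n : ℤ) := by omega
    have hreach := IH a b q hm hsmall
    refine hreach.tail ?_
    right; right; left
    have : 3 * a * b - q = c := by rw [hq]; ring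
    simp [Prod.ext_iff, this]

lemma markov_reach_all : ∀ n : ℕ, ∀ a b c : ℤ, IsMarkovTriple a b c →
    a + b + c ≤ (n : ℤ) → Relation.ReflTransGen MarkovStep (1, 1, 1) (a, b, c) := by
  intro n
  induction n with
  | zero =>
    intro a b c h hle
    exfalso
    obtain ⟨h1, h2, h3, _⟩ := h
    omega
  | succ n IH =>
    intro a b c h hle
    have hle' : a + b + c ≤ (n : ℤ) + 1 := by push_cast at hle ⊢; omega
    rcases le_total a b with h1 | h1 <;> rcases le_total b c with h2 | h2 <;>
      rcases le_total a c with h3 | h3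
    -- a ≤ b, b ≤ c
    · exact markov_core n IH a b c h h1 h2 hle'
    · exact markov_core n IH a b c h h1 h2 hle'
    -- a ≤ b, c ≤ b, a ≤ c : sorted (a, c, b)
    · have := markov_core n IH a c b (markov_swap23 h) h3 h2 (by linarith)
      exact this.tail (by right; right; right; left; norm_num)
    -- a ≤ b, c ≤ b, c ≤ a : sorted (c, a, b)
    · have := markov_core n IH c a b (markov_swap12 (markov_swap23 h)) h3 h1 (by linarith)
      exact this.tail (by right; right; right; right; right; left; norm_num)
    -- b ≤ a, b ≤ c, a ≤ c : sorted (b, a, c)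
    · have := markov_core n IH b a c (markov_swap12 h) h1 h3 (by linarith)
      exact this.tail (by right; right; right; right; left; norm_num)
    -- b ≤ a, b ≤ c, c ≤ a : sorted (b, c, a)
    · have := markov_core n IH b c a (markov_swap23 (markov_swap12 h)) h2 h3 (by linarith)
      exact this.tail (by right; right; right; right; right; right; left; norm_num)
    -- b ≤ a, c ≤ b : sorted (c, b, a)
    · have := markov_core n IH c b a (markov_swap23 (markov_swap12 (markov_swap23 h)))
        h2 h1 (by linarith)
      exact this.tail (by right; right; right; right; right; right; right; norm_num)
    · have := markov_core n IH c b a (markov_swap23 (markov_swap12 (markov_swap23 h)))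
        h2 h1 (by linarith)
      exact this.tail (by right; right; right; right; right; right; right; norm_num)

/-- Every Markov triple is obtained from `(1,1,1)` by a finite sequence of mutations
and permutations of the entries. -/
theorem markov_tree_reaches_all (p1 p2 p3 : ℤ) (h : IsMarkovTriple p1 p2 p3) :
    Relation.ReflTransGen MarkovStep (1, 1, 1) (p1, p2, p3) := by
  exact markov_reach_all (p1 + p2 + p3).toNat p1 p2 p3 h (Int.self_le_toNat _)
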